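/- Let f ∈ L²(ℝ³; |v·n| dv restricted to v·n>0) and 0 < α ≤ 1. Define the boundary trace γf on the full boundary phase space by γ₊f = f on {v·n>0} and γ₋f = (1−α)f(Rv) + α P_γ f on {v·n<0}, where Rv = v − 2(v·n)n and P_γ f(v) = √(2πμ(v))∫_{v'·n>0}(v'·n)f(v')√(μ(v'))dv'. Then (1/2)∫_{ℝ³}(v·n)|γf(v)|² dv = ((2−α)α/2) ∫_{v·n>0}(v·n)|(I − P_γ)f(v)|² dv. -/

import Mathlib

open MeasureTheory Real
open scoped InnerProductSpace

noncomputable def Maxwellian (v : EuclideanSpace ℝ (Fin 3)) : ℝ :=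
  (2 * π) ^ (-(3 : ℝ) / 2) * Real.exp (-‖v‖ ^ 2 / 2)

/-- The diffuse boundary projection P_γ. -/
noncomputable def Pgamma (n : EuclideanSpace ℝ (Fin 3))
    (f : EuclideanSpace ℝ (Fin 3) → ℝ) (v : EuclideanSpace ℝ (Fin 3)) : ℝ :=
  Real.sqrt (2 * π * Maxwellian v) *
    ∫ w in {w : EuclideanSpace ℝ (Fin 3) | 0 < ⟪w, n⟫_ℝ},
      ⟪w, n⟫_ℝ * f w * Real.sqrt (Maxwellian w)

/-- The full Maxwell boundary trace: f itself on the outgoing set, and the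
Maxwell reflection (1−α)f(Rv) + α P_γ f on the incoming set. -/
noncomputable def boundaryTrace (n : EuclideanSpace ℝ (Fin 3)) (α : ℝ)
    (f : EuclideanSpace ℝ (Fin 3) → ℝ) (v : EuclideanSpace ℝ (Fin 3)) : ℝ :=
  if 0 < ⟪v, n⟫_ℝ then f v
  else (1 - α) * f (v - (2 * ⟪v, n⟫_ℝ) • n) + α * Pgamma n f v

section Aux

local notation "H" => EuclideanSpace ℝ (Fin 3)

lemma maxwellian_pos (v : H) : 0 < Maxwellian v := by
  unfold Maxwellian
  positivity

/-! ### The specular reflection -/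

noncomputable def reflIso (n : H) : H ≃ₗᵢ[ℝ] H := Submodule.reflection ((ℝ ∙ n)ᗮ)

lemma reflIso_apply {n : H} (hn : ‖n‖ = 1) (v : H) :
    reflIso n v = v - (2 * ⟪v, n⟫_ℝ) • n := by
  rw [reflIso, Submodule.reflection_apply, Submodule.starProjection_orthogonal_val,
    Submodule.starProjection_unit_singleton ℝ hn, real_inner_comm]
  module

lemma inner_reflMap {n : H} (hn : ‖n‖ = 1) (v : H) :
    ⟪v - (2 * ⟪v, n⟫_ℝ) • n, n⟫_ℝ = -⟪v, n⟫_ℝ := by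
  have h : ⟪n, n⟫_ℝ = 1 := by
    rw [real_inner_self_eq_norm_sq, hn]; norm_num
  rw [inner_sub_left, real_inner_smul_left, h]
  ring

lemma reflMap_reflMap {n : H} (hn : ‖n‖ = 1) (v : H) :
    (v - (2 * ⟪v, n⟫_ℝ) • n) - (2 * ⟪v - (2 * ⟪v, n⟫_ℝ) • n, n⟫_ℝ) • n = v := by
  rw [inner_reflMap hn]
  module

lemma norm_reflMap {n : H} (hn : ‖n‖ = 1) (v : H) :
    ‖v - (2 * ⟪v, n⟫_ℝ) • n‖ = ‖v‖ := by
  rw [← reflIso_apply hn]; exact (reflIso n).norm_map v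

lemma maxwellian_reflMap {n : H} (hn : ‖n‖ = 1) (v : H) :
    Maxwellian (v - (2 * ⟪v, n⟫_ℝ) • n) = Maxwellian v := by
  unfold Maxwellian; rw [norm_reflMap hn]

lemma measurePreserving_reflMap {n : H} (hn : ‖n‖ = 1) :
    MeasurePreserving (fun v : H => v - (2 * ⟪v, n⟫_ℝ) • n) volume volume := by
  have h := (reflIso n).measurePreserving
  have heq : (fun v : H => v - (2 * ⟪v, n⟫_ℝ) • n) = ⇑(reflIso n) :=
    funext fun v => (reflIso_apply hn v).symm
  rw [heq]; exact h

lemma measurableEmbedding_reflMap {n : H} (hn : ‖n‖ = 1) :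
    MeasurableEmbedding (fun v : H => v - (2 * ⟪v, n⟫_ℝ) • n) := by
  have heq : (fun v : H => v - (2 * ⟪v, n⟫_ℝ) • n) = ⇑(reflIso n) :=
    funext fun v => (reflIso_apply hn v).symm
  rw [heq]
  exact (reflIso n).toHomeomorph.toMeasurableEquiv.measurableEmbedding

lemma null_hyperplane {n : H} (hn : ‖n‖ = 1) :
    volume {v : H | ⟪v, n⟫_ℝ = 0} = 0 := by
  have hset : {v : H | ⟪v, n⟫_ℝ = 0} = ((ℝ ∙ n)ᗮ : Submodule ℝ H) := by
    ext v
    simp [Submodule.mem_orthogonal_singleton_iff_inner_left]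
  rw [hset]
  refine Measure.addHaar_submodule _ _ ?_
  intro h
  have hn1 : ⟪n, n⟫_ℝ = 1 := by rw [real_inner_self_eq_norm_sq, hn]; norm_num
  have hmem : n ∈ (ℝ ∙ n)ᗮ := h ▸ Submodule.mem_top
  rw [Submodule.mem_orthogonal_singleton_iff_inner_left] at hmem
  rw [hmem] at hn1; norm_num at hn1

/-! ### One-dimensional Gaussian integrals -/

lemma integrableOn_mul_exp :
    IntegrableOn (fun t : ℝ => t * Real.exp (-t ^ 2 / 2)) (Set.Ioi 0) := by
  have h := (integrable_mul_exp_neg_mul_sq (b := 1/2) (by norm_num)).integrableOn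
    (s := Set.Ioi (0:ℝ))
  refine h.congr_fun (fun t _ => by ring_nf) measurableSet_Ioi

lemma integral_Ioi_mul_exp : ∫ t in Set.Ioi (0:ℝ), t * Real.exp (-t ^ 2 / 2) = 1 := by
  have hderiv : ∀ t ∈ Set.Ioi (0:ℝ),
      HasDerivAt (fun t : ℝ => -Real.exp (-t ^ 2 / 2)) (t * Real.exp (-t ^ 2 / 2)) t := by
    intro t _
    have h1 : HasDerivAt (fun t : ℝ => -t ^ 2 / 2) (-t) t := by
      have := ((hasDerivAt_pow 2 t).neg.div_const 2)
      simpa using this.congr_deriv (by ring)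
    have := (h1.exp).neg
    exact this.congr_deriv (by ring)
  have htend : Filter.Tendsto (fun t : ℝ => -Real.exp (-t ^ 2 / 2)) Filter.atTop (nhds 0) := by
    have h1 : Filter.Tendsto (fun t : ℝ => -t ^ 2 / 2) Filter.atTop Filter.atBot := by
      have h2 : Filter.Tendsto (fun t : ℝ => t * t) Filter.atTop Filter.atTop :=
        Filter.Tendsto.atTop_mul_atTop₀ Filter.tendsto_id Filter.tendsto_id
      have h3 : Filter.Tendsto (fun t : ℝ => t ^ 2 / 2) Filter.atTop Filter.atTop := by
        refine Filter.Tendsto.atTop_div_const (by norm_num) ?_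
        simpa [pow_two] using h2
      have := Filter.tendsto_neg_atTop_atBot.comp h3
      refine this.congr fun t => by simp [neg_div]
    have := (Real.tendsto_exp_atBot.comp h1).neg
    simpa using this
  have h := integral_Ioi_of_hasDerivAt_of_tendsto
    (f := fun t : ℝ => -Real.exp (-t ^ 2 / 2)) (a := 0)
    ((by fun_prop : Continuous fun t : ℝ => -Real.exp (-t ^ 2 / 2)).continuousWithinAt)
    hderiv integrableOn_mul_exp htend
  rw [h]; norm_num

lemma integral_exp_sq : ∫ t : ℝ, Real.exp (-t ^ 2 / 2) = Real.sqrt (2 * π) := by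
  have h := integral_gaussian (1/2)
  have he : ∀ t : ℝ, Real.exp (-(1/2 : ℝ) * t ^ 2) = Real.exp (-t ^ 2 / 2) := fun t => by ring_nf
  rw [show (fun t : ℝ => Real.exp (-t ^ 2 / 2)) = fun t : ℝ => Real.exp (-(1/2 : ℝ) * t ^ 2)
    from funext fun t => (he t).symm]
  rw [h]
  rw [show π / (1/2 : ℝ) = 2 * π by ring]

lemma integrable_exp_sq : Integrable (fun t : ℝ => Real.exp (-t ^ 2 / 2)) := by
  have h := integrable_exp_neg_mul_sq (b := 1/2) (by norm_num)
  exact h.congr (Filter.Eventually.of_forall fun t => by ring_nf)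

/-! ### The half-space Gaussian integral on `ℝ³` -/

noncomputable def gfun : Fin 3 → ℝ → ℝ := fun i t =>
  if i = 0 then Set.indicator (Set.Ioi 0) (fun s => s * Real.exp (-s ^ 2 / 2)) t
  else Real.exp (-t ^ 2 / 2)

lemma gfun_integrable (i : Fin 3) : Integrable (gfun i) := by
  unfold gfun
  split_ifs
  · exact (integrable_indicator_iff measurableSet_Ioi).mpr integrableOn_mul_exp
  · exact integrable_exp_sq

lemma pi_prod_integral : ∫ y : Fin 3 → ℝ, ∏ i, gfun i (y i) = 2 * π := by
  rw [MeasureTheory.integral_fintype_prod_volume_eq_prod]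
  rw [Fin.prod_univ_three]
  have h0 : ∫ t : ℝ, gfun 0 t = 1 := by
    simp only [gfun, if_pos rfl, if_true]
    rw [integral_indicator measurableSet_Ioi, integral_Ioi_mul_exp]
  have h1 : ∫ t : ℝ, gfun 1 t = Real.sqrt (2 * π) := by
    simp only [gfun, if_neg (by decide : (1 : Fin 3) ≠ 0)]
    exact integral_exp_sq
  have h2 : ∫ t : ℝ, gfun 2 t = Real.sqrt (2 * π) := by
    simp only [gfun, if_neg (by decide : (2 : Fin 3) ≠ 0)]
    exact integral_exp_sq
  rw [h0, h1, h2, one_mul, Real.mul_self_sqrt (by positivity : (0:ℝ) ≤ 2 * π)]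

lemma pi_prod_indicator (y : Fin 3 → ℝ) :
    Set.indicator {y : Fin 3 → ℝ | 0 < y 0}
      (fun y : Fin 3 → ℝ => y 0 * Real.exp (-(∑ i, (y i) ^ 2) / 2)) y
      = ∏ i, gfun i (y i) := by
  rw [Fin.prod_univ_three]
  simp only [gfun, if_pos rfl, if_true, if_neg (by decide : (1 : Fin 3) ≠ 0),
    if_neg (by decide : (2 : Fin 3) ≠ 0)]
  by_cases h : 0 < y 0
  · rw [Set.indicator_of_mem (by exact h), Set.indicator_of_mem (Set.mem_Ioi.mpr h)]
    rw [Fin.sum_univ_three,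
      show y 0 * Real.exp (-y 0 ^ 2 / 2) * Real.exp (-y 1 ^ 2 / 2) * Real.exp (-y 2 ^ 2 / 2)
        = y 0 * Real.exp (-y 0 ^ 2 / 2 + -y 1 ^ 2 / 2 + -y 2 ^ 2 / 2) by
          rw [Real.exp_add, Real.exp_add]; ring]
    congr 2
    ring
  · rw [Set.indicator_of_notMem (by exact h), Set.indicator_of_notMem (by simpa using h)]
    simp

lemma gauss_main {n : H} (hn : ‖n‖ = 1) :
    IntegrableOn (fun v : H => ⟪v, n⟫_ℝ * Maxwellian v) {v : H | 0 < ⟪v, n⟫_ℝ} ∧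
    ∫ v in {v : H | 0 < ⟪v, n⟫_ℝ}, ⟪v, n⟫_ℝ * Maxwellian v = (Real.sqrt (2 * π))⁻¹ := by
  set n₀ : H := EuclideanSpace.single (0 : Fin 3) (1:ℝ) with hn₀def
  have hn₀ : ‖n₀‖ = 1 := by simp [hn₀def]
  set e : H ≃ₗᵢ[ℝ] H := Submodule.reflection (ℝ ∙ (n - n₀))ᗮ with hedef
  have he : e n = n₀ := Submodule.reflection_sub (by rw [hn, hn₀])
  set T : Set H := {x : H | 0 < ⟪x, n₀⟫_ℝ} with hTdef
  have hTmeas : MeasurableSet T :=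
    (isOpen_lt continuous_const ((continuous_id.inner continuous_const))).measurableSet
  have hpre : {v : H | 0 < ⟪v, n⟫_ℝ} = e ⁻¹' T := by
    ext v
    simp only [Set.mem_preimage, Set.mem_setOf_eq, hTdef]
    rw [← he, e.inner_map_map]
  set g : H → ℝ := fun x => ⟪x, n₀⟫_ℝ * Maxwellian x with hgdef
  have hcomp : ∀ v : H, ⟪v, n⟫_ℝ * Maxwellian v = g (e v) := by
    intro v
    simp only [hgdef]
    rw [← he, e.inner_map_map]
    have : Maxwellian (e v) = Maxwellian v := by unfold Maxwellian; rw [e.norm_map]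
    rw [this]
  have hemb : MeasurableEmbedding (⇑e) :=
    e.toHomeomorph.toMeasurableEquiv.measurableEmbedding
  set φ := (MeasurableEquiv.toLp 2 (Fin 3 → ℝ)).symm with hφdef
  have hφ : MeasurePreserving (⇑φ.symm) volume volume :=
    (EuclideanSpace.volume_preserving_symm_measurableEquiv_toLp (Fin 3)).symm
  have hpoint : ∀ y : Fin 3 → ℝ,
      T.indicator g (φ.symm y) = (2 * π) ^ (-(3:ℝ)/2) * ∏ i, gfun i (y i) := by
    intro y
    have hy : ∀ i, (φ.symm y : H) i = y i := fun i => rfl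
    have hyin : ⟪(φ.symm y : H), n₀⟫_ℝ = y 0 := by
      rw [hn₀def, EuclideanSpace.inner_single_right]
      simp [hy]
    have hnrm : ‖(φ.symm y : H)‖ ^ 2 = ∑ i, (y i) ^ 2 := by
      rw [EuclideanSpace.norm_eq, Real.sq_sqrt (by positivity)]
      exact Finset.sum_congr rfl fun i _ => by rw [hy, Real.norm_eq_abs, sq_abs]
    rw [← pi_prod_indicator]
    by_cases h : 0 < y 0
    · rw [Set.indicator_of_mem (by simp only [hTdef, Set.mem_setOf_eq, hyin]; exact h),
        Set.indicator_of_mem (by exact h)]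
      simp only [hgdef]
      rw [hyin]
      unfold Maxwellian
      rw [hnrm]
      ring
    · rw [Set.indicator_of_notMem (by simp only [hTdef, Set.mem_setOf_eq, hyin]; exact h),
        Set.indicator_of_notMem (by exact h)]
      simp
  have hint_pi : Integrable (fun y : Fin 3 → ℝ => ∏ i, gfun i (y i)) :=
    Integrable.fintype_prod (fun i => gfun_integrable i)
  have hIT : IntegrableOn g T := by
    rw [← integrable_indicator_iff hTmeas]
    rw [← hφ.integrable_comp_emb φ.symm.measurableEmbedding]
    have : (T.indicator g) ∘ ⇑φ.symm
        = fun y => (2 * π) ^ (-(3:ℝ)/2) * ∏ i, gfun i (y i) := funext fun y => hpoint y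
    rw [this]
    exact hint_pi.const_mul _
  have hI : IntegrableOn (fun v : H => ⟪v, n⟫_ℝ * Maxwellian v) {v : H | 0 < ⟪v, n⟫_ℝ} := by
    rw [hpre]
    have := (e.measurePreserving.integrableOn_comp_preimage hemb (f := g) (s := T)).mpr hIT
    exact this.congr_fun (fun v _ => (hcomp v).symm) (hTmeas.preimage e.continuous.measurable)
  refine ⟨hI, ?_⟩
  have step1 : ∫ v in {v : H | 0 < ⟪v, n⟫_ℝ}, ⟪v, n⟫_ℝ * Maxwellian v
      = ∫ x in T, g x := by
    rw [hpre]
    rw [← e.measurePreserving.setIntegral_preimage_emb hemb g T]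
    exact setIntegral_congr_fun (hTmeas.preimage e.continuous.measurable)
      (fun v _ => hcomp v)
  rw [step1, ← integral_indicator hTmeas, ← hφ.integral_comp φ.symm.measurableEmbedding]
  rw [show (fun y => T.indicator g (φ.symm y))
      = fun y => (2 * π) ^ (-(3:ℝ)/2) * ∏ i, gfun i (y i) from funext fun y => hpoint y]
  rw [MeasureTheory.integral_const_mul, pi_prod_integral]
  have h2π : (0:ℝ) < 2 * π := by positivity
  rw [show ((2 * π : ℝ) ^ (-(3:ℝ)/2)) * (2 * π)
      = (2 * π : ℝ) ^ (-(3:ℝ)/2) * (2 * π) ^ (1:ℝ) by rw [Real.rpow_one]]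
  rw [← Real.rpow_add h2π, Real.sqrt_eq_rpow, ← Real.rpow_neg h2π.le]
  norm_num

end Aux

/-- the boundary dissipation identity for the Maxwell reflection
boundary condition. -/
theorem boundary_dissipation_identity (n : EuclideanSpace ℝ (Fin 3)) (hn : ‖n‖ = 1)
    (α : ℝ) (hα : 0 < α) (hα1 : α ≤ 1)
    (f : EuclideanSpace ℝ (Fin 3) → ℝ)
    (hf : IntegrableOn (fun v => ⟪v, n⟫_ℝ * f v ^ 2)
      {v : EuclideanSpace ℝ (Fin 3) | 0 < ⟪v, n⟫_ℝ}) :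
    (1 / 2) * ∫ v, ⟪v, n⟫_ℝ * (boundaryTrace n α f v) ^ 2 =
      ((2 - α) * α / 2) *
        ∫ v in {v : EuclideanSpace ℝ (Fin 3) | 0 < ⟪v, n⟫_ℝ},
          ⟪v, n⟫_ℝ * (f v - Pgamma n f v) ^ 2 := by
  classical
  set S : Set (EuclideanSpace ℝ (Fin 3)) := {v | 0 < ⟪v, n⟫_ℝ} with hSdef
  have hSmeas : MeasurableSet S :=
    (isOpen_lt continuous_const (continuous_id.inner continuous_const)).measurableSet
  obtain ⟨I2, V2⟩ := gauss_main hn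
  set c : ℝ := ∫ w in S, ⟪w, n⟫_ℝ * f w * Real.sqrt (Maxwellian w) with hcdef
  have hP : ∀ v, Pgamma n f v = (Real.sqrt (2 * π) * c) * Real.sqrt (Maxwellian v) := by
    intro v
    simp only [Pgamma]
    rw [Real.sqrt_mul (by positivity : (0:ℝ) ≤ 2 * π) (Maxwellian v), ← hSdef, ← hcdef]
    ring
  have hPsq : ∀ v, (Pgamma n f v) ^ 2 = (2 * π * c ^ 2) * Maxwellian v := by
    intro v
    rw [hP v]
    have h1 : Real.sqrt (2 * π) ^ 2 = 2 * π := Real.sq_sqrt (by positivity)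
    have h2 : Real.sqrt (Maxwellian v) ^ 2 = Maxwellian v := Real.sq_sqrt (maxwellian_pos v).le
    rw [mul_pow, mul_pow, h1, h2]
  have hcase : IntegrableOn (fun w => ⟪w, n⟫_ℝ * f w * Real.sqrt (Maxwellian w)) S ∨ c = 0 := by
    by_cases hci : IntegrableOn (fun w => ⟪w, n⟫_ℝ * f w * Real.sqrt (Maxwellian w)) S
    · exact Or.inl hci
    · exact Or.inr (integral_undef hci)
  have hfP_eq : (fun v => ⟪v, n⟫_ℝ * (f v * Pgamma n f v))
      = fun v => (Real.sqrt (2 * π) * c) * (⟪v, n⟫_ℝ * f v * Real.sqrt (Maxwellian v)) :=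
    funext fun v => by rw [hP v]; ring
  have I3 : IntegrableOn (fun v => ⟪v, n⟫_ℝ * (f v * Pgamma n f v)) S := by
    rw [hfP_eq]
    rcases hcase with hci | hc0
    · exact hci.const_mul _
    · rw [hc0]
      simp only [mul_zero, zero_mul]
      exact integrableOn_zero
  have V3 : ∫ v in S, ⟪v, n⟫_ℝ * (f v * Pgamma n f v) = Real.sqrt (2 * π) * c ^ 2 := by
    rw [hfP_eq, MeasureTheory.integral_const_mul, ← hcdef]
    ring
  have hPsq_eq : (fun v => ⟪v, n⟫_ℝ * (Pgamma n f v) ^ 2)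
      = fun v => (2 * π * c ^ 2) * (⟪v, n⟫_ℝ * Maxwellian v) :=
    funext fun v => by rw [hPsq v]; ring
  have I4 : IntegrableOn (fun v => ⟪v, n⟫_ℝ * (Pgamma n f v) ^ 2) S := by
    rw [hPsq_eq]; exact I2.const_mul _
  have V4 : ∫ v in S, ⟪v, n⟫_ℝ * (Pgamma n f v) ^ 2 = Real.sqrt (2 * π) * c ^ 2 := by
    rw [hPsq_eq, MeasureTheory.integral_const_mul, V2]
    have h1 : Real.sqrt (2 * π) * Real.sqrt (2 * π) = 2 * π :=
      Real.mul_self_sqrt (by positivity)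
    have hs : Real.sqrt (2 * π) ≠ 0 := by positivity
    calc 2 * π * c ^ 2 * (Real.sqrt (2 * π))⁻¹
        = (Real.sqrt (2 * π) * Real.sqrt (2 * π)) * c ^ 2 * (Real.sqrt (2 * π))⁻¹ := by
          rw [h1]
      _ = Real.sqrt (2 * π) * c ^ 2 := by
          field_simp
  -- the right-hand side integral
  have hRHS : ∫ v in S, ⟪v, n⟫_ℝ * (f v - Pgamma n f v) ^ 2
      = (∫ v in S, ⟪v, n⟫_ℝ * f v ^ 2) - Real.sqrt (2 * π) * c ^ 2 := by
    have hexp : (fun v => ⟪v, n⟫_ℝ * (f v - Pgamma n f v) ^ 2)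
        = fun v => (⟪v, n⟫_ℝ * f v ^ 2 - 2 * (⟪v, n⟫_ℝ * (f v * Pgamma n f v)))
            + ⟪v, n⟫_ℝ * (Pgamma n f v) ^ 2 := funext fun v => by ring
    have hsub : Integrable
        (fun v => ⟪v, n⟫_ℝ * f v ^ 2 - 2 * (⟪v, n⟫_ℝ * (f v * Pgamma n f v)))
        (volume.restrict S) := hf.sub (I3.const_mul 2)
    rw [hexp, integral_add hsub I4,
      integral_sub hf (I3.const_mul 2), MeasureTheory.integral_const_mul, V3, V4]
    ring
  -- the reflected quadratic form
  set G' : EuclideanSpace ℝ (Fin 3) → ℝ :=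
    fun x => ⟪x, n⟫_ℝ * ((1 - α) * f x + α * Pgamma n f x) ^ 2 with hG'def
  have hG'exp : G' = fun v =>
      (((1 - α) ^ 2) * (⟪v, n⟫_ℝ * f v ^ 2)
        + (2 * (1 - α) * α) * (⟪v, n⟫_ℝ * (f v * Pgamma n f v)))
        + (α ^ 2) * (⟪v, n⟫_ℝ * (Pgamma n f v) ^ 2) :=
    funext fun v => by simp only [hG'def]; ring
  have IG' : IntegrableOn G' S := by
    rw [hG'exp]
    exact ((hf.const_mul _).add (I3.const_mul _)).add (I4.const_mul _)
  have VG' : ∫ v in S, G' v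
      = (1 - α) ^ 2 * (∫ v in S, ⟪v, n⟫_ℝ * f v ^ 2)
        + (2 * (1 - α) * α + α ^ 2) * (Real.sqrt (2 * π) * c ^ 2) := by
    have ha : Integrable
        (fun v => ((1 - α) ^ 2) * (⟪v, n⟫_ℝ * f v ^ 2)
          + (2 * (1 - α) * α) * (⟪v, n⟫_ℝ * (f v * Pgamma n f v)))
        (volume.restrict S) := (hf.const_mul _).add (I3.const_mul _)
    rw [hG'exp, integral_add ha (I4.const_mul _),
      integral_add (hf.const_mul _) (I3.const_mul _),
      MeasureTheory.integral_const_mul, MeasureTheory.integral_const_mul,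
      MeasureTheory.integral_const_mul, V3, V4]
    ring
  -- reflection machinery
  have hRmp := measurePreserving_reflMap hn
  have hRemb := measurableEmbedding_reflMap hn
  have hPR : ∀ v, Pgamma n f (v - (2 * ⟪v, n⟫_ℝ) • n) = Pgamma n f v := by
    intro v
    rw [hP, hP, maxwellian_reflMap hn]
  set G : EuclideanSpace ℝ (Fin 3) → ℝ :=
    fun v => ⟪v, n⟫_ℝ * ((1 - α) * f (v - (2 * ⟪v, n⟫_ℝ) • n) + α * Pgamma n f v) ^ 2
    with hGdef
  have hGR : ∀ x, G (x - (2 * ⟪x, n⟫_ℝ) • n) = -G' x := by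
    intro x
    simp only [hGdef, hG'def]
    rw [reflMap_reflMap hn, hPR, inner_reflMap hn]
    ring
  set Sneg : Set (EuclideanSpace ℝ (Fin 3)) := {v | ⟪v, n⟫_ℝ < 0} with hSnegdef
  have hpre : (fun v : EuclideanSpace ℝ (Fin 3) => v - (2 * ⟪v, n⟫_ℝ) • n) ⁻¹' Sneg = S := by
    ext v
    simp only [Set.mem_preimage, hSnegdef, Set.mem_setOf_eq, hSdef]
    rw [inner_reflMap hn]
    exact neg_lt_zero
  have IGneg : IntegrableOn G Sneg := by
    have hiff := hRmp.integrableOn_comp_preimage hRemb (f := G) (s := Sneg)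
    rw [hpre] at hiff
    refine hiff.mp ?_
    have : (G ∘ fun v : EuclideanSpace ℝ (Fin 3) => v - (2 * ⟪v, n⟫_ℝ) • n)
        = fun x => -G' x := funext fun x => hGR x
    rw [this]
    exact IG'.neg
  have VGneg : ∫ v in Sneg, G v = -∫ v in S, G' v := by
    rw [← hRmp.setIntegral_preimage_emb hRemb G Sneg, hpre]
    rw [show (fun x : EuclideanSpace ℝ (Fin 3) => G (x - (2 * ⟪x, n⟫_ℝ) • n))
        = fun x => -G' x from funext fun x => hGR x]
    exact integral_neg _
  -- compare Sᶜ with Sneg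
  have hae : (Sᶜ : Set (EuclideanSpace ℝ (Fin 3))) =ᵐ[volume] Sneg := by
    refine MeasureTheory.ae_eq_set.mpr ?_
    constructor
    · refine measure_mono_null ?_ (null_hyperplane hn)
      intro v hv
      obtain ⟨h1, h2⟩ := hv
      have h1' : ⟪v, n⟫_ℝ ≤ 0 := not_lt.mp h1
      have h2' : (0:ℝ) ≤ ⟪v, n⟫_ℝ := not_lt.mp h2
      exact le_antisymm h1' h2'
    · have hempty : Sneg \ Sᶜ = ∅ := by
        rw [Set.diff_eq_empty]
        intro v hv
        simp only [hSnegdef, Set.mem_setOf_eq] at hv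
        simp only [Set.mem_compl_iff, hSdef, Set.mem_setOf_eq]
        exact not_lt.mpr hv.le
      rw [hempty, measure_empty]
  -- splitting the full integral
  have hFS : Set.EqOn (fun v => ⟪v, n⟫_ℝ * (boundaryTrace n α f v) ^ 2)
      (fun v => ⟪v, n⟫_ℝ * f v ^ 2) S := by
    intro v hv
    have hv' : 0 < ⟪v, n⟫_ℝ := by rwa [hSdef, Set.mem_setOf_eq] at hv
    simp only [boundaryTrace]
    rw [if_pos hv']
  have hFSc : Set.EqOn (fun v => ⟪v, n⟫_ℝ * (boundaryTrace n α f v) ^ 2) G Sᶜ := by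
    intro v hv
    have hv' : ¬ 0 < ⟪v, n⟫_ℝ := by
      rw [Set.mem_compl_iff, hSdef, Set.mem_setOf_eq] at hv
      exact hv
    simp only [boundaryTrace, hGdef]
    rw [if_neg hv']
  have IFS : IntegrableOn (fun v => ⟪v, n⟫_ℝ * (boundaryTrace n α f v) ^ 2) S :=
    hf.congr_fun (fun v hv => (hFS hv).symm) hSmeas
  have IGSc : IntegrableOn G Sᶜ := by
    rw [IntegrableOn, Measure.restrict_congr_set hae]
    exact IGneg
  have IFSc : IntegrableOn (fun v => ⟪v, n⟫_ℝ * (boundaryTrace n α f v) ^ 2) Sᶜ :=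
    IGSc.congr_fun (fun v hv => (hFSc hv).symm) hSmeas.compl
  have IF : Integrable (fun v => ⟪v, n⟫_ℝ * (boundaryTrace n α f v) ^ 2) := by
    rw [← integrableOn_univ, ← Set.union_compl_self S]
    exact IFS.union IFSc
  have hsplit := (integral_add_compl hSmeas IF).symm
  have h1 : ∫ v in S, ⟪v, n⟫_ℝ * (boundaryTrace n α f v) ^ 2
      = ∫ v in S, ⟪v, n⟫_ℝ * f v ^ 2 := setIntegral_congr_fun hSmeas hFS
  have h2 : ∫ v in Sᶜ, ⟪v, n⟫_ℝ * (boundaryTrace n α f v) ^ 2 = -∫ v in S, G' v := by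
    rw [setIntegral_congr_fun hSmeas.compl hFSc]
    rw [show volume.restrict Sᶜ = volume.restrict Sneg from Measure.restrict_congr_set hae]
    exact VGneg
  rw [hRHS]
  rw [show (∫ v, ⟪v, n⟫_ℝ * (boundaryTrace n α f v) ^ 2)
      = (∫ v in S, ⟪v, n⟫_ℝ * (boundaryTrace n α f v) ^ 2)
        + ∫ v in Sᶜ, ⟪v, n⟫_ℝ * (boundaryTrace n α f v) ^ 2 from hsplit]
  rw [h1, h2, VG']
  ring
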